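/- arXiv:2310.03877 — 4 statements merged into one kernel-verified Lean document; each statement's English description precedes it below -/
import Mathlib

section
/- Let a < b be real numbers, W : ℝ → ℝ a function that is C¹ on (a,b), and (λ_j) a strictly increasing sequence of real numbers. For each j let f_j : ℝ → ℝ be C² on (a,b), not identically zero on (a,b), and satisfy −f_j''(x) + W(x)·f_j(x) = λ_j·f_j(x) for all x ∈ (a,b). Then for any integer M ≥ 1, any strictly increasing indices k_1 < k_2 < … < k_M, and any nonzero real numbers a_1, …, a_M, the function G(x) = Σ_{i=1}^M a_i·f_{k_i}(x) does not vanish identically on any nonempty open subset of (a,b). -/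
open Set

/-- A solution of `f'' = (W - lam) f` on `(a,b)` that vanishes to first order at a point
vanishes everywhere on `(a,b)`. -/
private lemma eigen_vanish_propagate
    (a b : ℝ) (W : ℝ → ℝ) (hW : ContDiffOn ℝ 1 W (Set.Ioo a b))
    (lam : ℝ) (f : ℝ → ℝ) (hf : ContDiffOn ℝ 2 f (Set.Ioo a b))
    (heq : ∀ x ∈ Set.Ioo a b, deriv (deriv f) x = (W x - lam) * f x)
    (x₀ : ℝ) (hx₀ : x₀ ∈ Set.Ioo a b) (h0 : f x₀ = 0) (h0' : deriv f x₀ = 0)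
    (x : ℝ) (hx : x ∈ Set.Ioo a b) : f x = 0 := by
  set a' : ℝ := (a + min x x₀) / 2 with ha'def
  set b' : ℝ := (max x x₀ + b) / 2 with hb'def
  have hmin : a < min x x₀ := lt_min hx.1 hx₀.1
  have hmax : max x x₀ < b := max_lt hx.2 hx₀.2
  have haa' : a < a' := by rw [ha'def]; linarith
  have ha'min : a' < min x x₀ := by rw [ha'def]; linarith
  have hmaxb' : max x x₀ < b' := by rw [hb'def]; linarith
  have hb'b : b' < b := by rw [hb'def]; linarith
  have ha'b' : a' < b' := lt_trans ha'min (lt_of_le_of_lt (min_le_max) hmaxb')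
  have hsub : Icc a' b' ⊆ Ioo a b := fun t ht => ⟨lt_of_lt_of_le haa' ht.1, lt_of_le_of_lt ht.2 hb'b⟩
  have hsub' : Ioo a' b' ⊆ Ioo a b := fun t ht => hsub (Ioo_subset_Icc_self ht)
  -- bound on W - lam on the compact interval
  obtain ⟨C, hC⟩ := isCompact_Icc.exists_bound_of_continuousOn
    ((hW.continuousOn.mono hsub).sub continuousOn_const)
  have hC0 : 0 ≤ C := le_trans (norm_nonneg _) (hC a' ⟨le_rfl, le_of_lt ha'b'⟩)
  -- the clamped coefficient
  set q : ℝ → ℝ := fun t => W (min b' (max a' t)) - lam with hqdef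
  have hqmem : ∀ t : ℝ, min b' (max a' t) ∈ Icc a' b' := by
    intro t
    constructor
    · exact le_min (le_of_lt ha'b') (le_max_left _ _)
    · exact min_le_left _ _
  have hqbound : ∀ t : ℝ, |q t| ≤ C := fun t => hC _ (hqmem t)
  set K : NNReal := Real.toNNReal (max 1 C) with hKdef
  have hKval : (K : ℝ) = max 1 C := Real.coe_toNNReal _ (le_trans zero_le_one (le_max_left _ _))
  set v : ℝ → ℝ × ℝ → ℝ × ℝ := fun t p => (p.2, q t * p.1) with hvdef
  have hv : ∀ t : ℝ, LipschitzOnWith K (v t) Set.univ := by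
    intro t
    apply LipschitzWith.lipschitzOnWith
    apply LipschitzWith.of_dist_le_mul
    intro p p'
    rw [Prod.dist_eq, Prod.dist_eq, hKval]
    simp only [hvdef]
    have hd1 : (0:ℝ) ≤ dist p.1 p'.1 := dist_nonneg
    have hd2 : (0:ℝ) ≤ dist p.2 p'.2 := dist_nonneg
    have hq' : dist (q t * p.1) (q t * p'.1) = |q t| * dist p.1 p'.1 := by
      rw [Real.dist_eq, Real.dist_eq, ← mul_sub, abs_mul]
    apply max_le
    · calc dist p.2 p'.2 ≤ max (dist p.1 p'.1) (dist p.2 p'.2) := le_max_right _ _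
        _ ≤ max 1 C * max (dist p.1 p'.1) (dist p.2 p'.2) := by
            nlinarith [le_max_left (1:ℝ) C, le_max_left (dist p.1 p'.1) (dist p.2 p'.2)]
    · rw [hq']
      calc |q t| * dist p.1 p'.1 ≤ C * dist p.1 p'.1 :=
            mul_le_mul_of_nonneg_right (hqbound t) hd1
        _ ≤ max 1 C * max (dist p.1 p'.1) (dist p.2 p'.2) := by
            apply mul_le_mul (le_max_right _ _) (le_max_left _ _) hd1
            exact le_trans zero_le_one (le_max_left _ _)
  -- derivatives of f
  have hfd : DifferentiableOn ℝ f (Ioo a b) := hf.differentiableOn two_ne_zero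
  have hfd2 : ContDiffOn ℝ 1 (deriv f) (Ioo a b) :=
    hf.deriv_of_isOpen isOpen_Ioo (by norm_num)
  have hfd' : DifferentiableOn ℝ (deriv f) (Ioo a b) := hfd2.differentiableOn one_ne_zero
  set g : ℝ → ℝ × ℝ := fun t => (f t, deriv f t) with hgdef
  have hg : ∀ t ∈ Ioo a' b', HasDerivAt g (v t (g t)) t ∧ g t ∈ (fun _ : ℝ => (univ : Set (ℝ × ℝ))) t := by
    intro t ht
    have htab : t ∈ Ioo a b := hsub' ht
    have h1 : HasDerivAt f (deriv f t) t :=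
      (hfd.differentiableAt (isOpen_Ioo.mem_nhds htab)).hasDerivAt
    have h2 : HasDerivAt (deriv f) (deriv (deriv f) t) t :=
      (hfd'.differentiableAt (isOpen_Ioo.mem_nhds htab)).hasDerivAt
    have hclamp : min b' (max a' t) = t := by
      rw [max_eq_right (le_of_lt ht.1), min_eq_right (le_of_lt ht.2)]
    have hveq : v t (g t) = (deriv f t, deriv (deriv f) t) := by
      simp only [hvdef, hgdef, hqdef, hclamp]
      rw [heq t htab]
    refine ⟨?_, mem_univ _⟩
    rw [hveq]
    exact h1.prodMk h2
  have hzero : ∀ t ∈ Ioo a' b', HasDerivAt (fun _ : ℝ => ((0:ℝ), (0:ℝ))) (v t ((0:ℝ),(0:ℝ))) t ∧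
      ((0:ℝ),(0:ℝ)) ∈ (fun _ : ℝ => (univ : Set (ℝ × ℝ))) t := by
    intro t ht
    refine ⟨?_, mem_univ _⟩
    have : v t ((0:ℝ),(0:ℝ)) = ((0:ℝ),(0:ℝ)) := by simp [hvdef]
    rw [this]
    exact hasDerivAt_const t _
  have hx₀' : x₀ ∈ Ioo a' b' :=
    ⟨lt_of_lt_of_le ha'min (min_le_right _ _), lt_of_le_of_lt (le_max_right x x₀) hmaxb'⟩
  have hx' : x ∈ Ioo a' b' :=
    ⟨lt_of_lt_of_le ha'min (min_le_left _ _), lt_of_le_of_lt (le_max_left x x₀) hmaxb'⟩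
  have hinit : g x₀ = ((0:ℝ),(0:ℝ)) := by simp [hgdef, h0, h0']
  have := ODE_solution_unique_of_mem_Ioo (fun t _ => hv t) hx₀' hg hzero hinit hx'
  exact ((Prod.ext_iff.mp this).1)

/-- A nontrivial linear combination of Sturm–Liouville eigen-solutions on
an interval (a,b) (with strictly increasing eigenvalues and nonzero coefficients)
cannot vanish identically on any nonempty open subset of (a,b). -/
theorem linear_combination_not_zero_on_open_set
    (a b : ℝ) (hab : a < b)
    (W : ℝ → ℝ) (hW : ContDiffOn ℝ 1 W (Set.Ioo a b))
    (lam : ℕ → ℝ) (hlam : StrictMono lam)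
    (f : ℕ → ℝ → ℝ)
    (hf_smooth : ∀ j, ContDiffOn ℝ 2 (f j) (Set.Ioo a b))
    (hf_nonzero : ∀ j, ∃ x ∈ Set.Ioo a b, f j x ≠ 0)
    (hf_eq : ∀ j, ∀ x ∈ Set.Ioo a b,
      -(deriv (deriv (f j)) x) + W x * f j x = lam j * f j x)
    (M : ℕ) (hM : 1 ≤ M)
    (k : Fin M → ℕ) (hk : StrictMono k)
    (c : Fin M → ℝ) (hc : ∀ i, c i ≠ 0)
    (U : Set ℝ) (hUsub : U ⊆ Set.Ioo a b) (hUopen : IsOpen U) (hUne : U.Nonempty) :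
    ¬ (∀ x ∈ U, (∑ i, c i * f (k i) x) = 0) := by
  intro hvan
  -- second derivatives in nice form
  have hsecond : ∀ j, ∀ x ∈ Set.Ioo a b, deriv (deriv (f j)) x = (W x - lam j) * f j x := by
    intro j x hx
    have h := hf_eq j x hx
    ring_nf
    ring_nf at h
    linarith
  have hdiff : ∀ j, DifferentiableOn ℝ (f j) (Set.Ioo a b) :=
    fun j => (hf_smooth j).differentiableOn two_ne_zero
  have hdiff' : ∀ j, DifferentiableOn ℝ (deriv (f j)) (Set.Ioo a b) :=
    fun j => (show ContDiffOn ℝ 1 (deriv (f j)) (Set.Ioo a b) from (hf_smooth j).deriv_of_isOpen isOpen_Ioo (by norm_num)).differentiableOn one_ne_zero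
  -- Step 1: iterated identities
  have hiter : ∀ m : ℕ, ∀ x ∈ U, (∑ i, c i * (lam (k i))^m * f (k i) x) = 0 := by
    intro m
    induction m with
    | zero => intro x hx; simpa using hvan x hx
    | succ m ih =>
      intro x hx
      have hxab : x ∈ Set.Ioo a b := hUsub hx
      set F : ℝ → ℝ := fun y => ∑ i, c i * (lam (k i))^m * f (k i) y with hFdef
      -- deriv F = 0 on U
      have hd1 : ∀ y ∈ U, deriv F y = 0 := by
        intro y hy
        have hEq : F =ᶠ[nhds y] (fun _ => (0:ℝ)) :=
          Filter.eventuallyEq_of_mem (hUopen.mem_nhds hy) ih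
        rw [hEq.deriv_eq, deriv_const]
      have hd2 : deriv (deriv F) x = 0 := by
        have hEq : deriv F =ᶠ[nhds x] (fun _ => (0:ℝ)) :=
          Filter.eventuallyEq_of_mem (hUopen.mem_nhds hx) hd1
        rw [hEq.deriv_eq, deriv_const]
      -- deriv F on Ioo a b
      have hderivF : ∀ y ∈ Set.Ioo a b,
          deriv F y = ∑ i, c i * (lam (k i))^m * deriv (f (k i)) y := by
        intro y hy
        rw [hFdef]
        rw [deriv_fun_sum (fun i _ => (((hdiff (k i)).differentiableAt
          (isOpen_Ioo.mem_nhds hy)).const_mul _))]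
        refine Finset.sum_congr rfl fun i _ => ?_
        rw [deriv_const_mul _ ((hdiff (k i)).differentiableAt (isOpen_Ioo.mem_nhds hy))]
      have hderiv2F : deriv (deriv F) x =
          ∑ i, c i * (lam (k i))^m * deriv (deriv (f (k i))) x := by
        have hEq : deriv F =ᶠ[nhds x]
            (fun y => ∑ i, c i * (lam (k i))^m * deriv (f (k i)) y) :=
          Filter.eventuallyEq_of_mem (isOpen_Ioo.mem_nhds hxab) hderivF
        rw [hEq.deriv_eq]
        rw [deriv_fun_sum (fun i _ => (((hdiff' (k i)).differentiableAt
          (isOpen_Ioo.mem_nhds hxab)).const_mul _))]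
        refine Finset.sum_congr rfl fun i _ => ?_
        rw [deriv_const_mul _ ((hdiff' (k i)).differentiableAt (isOpen_Ioo.mem_nhds hxab))]
      have hkey : (∑ i, c i * (lam (k i))^m * ((W x - lam (k i)) * f (k i) x)) = 0 := by
        rw [← hd2, hderiv2F]
        refine Finset.sum_congr rfl fun i _ => ?_
        rw [hsecond (k i) x hxab]
      have hexpand : (∑ i, c i * (lam (k i))^m * ((W x - lam (k i)) * f (k i) x)) =
          W x * (∑ i, c i * (lam (k i))^m * f (k i) x)
            - ∑ i, c i * (lam (k i))^(m+1) * f (k i) x := by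
        rw [Finset.mul_sum, ← Finset.sum_sub_distrib]
        refine Finset.sum_congr rfl fun i _ => ?_
        ring
      have hFx : (∑ i, c i * (lam (k i))^m * f (k i) x) = 0 := ih x hx
      rw [hexpand, hFx] at hkey
      linarith
  -- Step 2: Vandermonde ⇒ each f (k i) vanishes on U
  have hvanish : ∀ i : Fin M, ∀ x ∈ U, f (k i) x = 0 := by
    intro i x hx
    have hinj : Function.Injective (fun i : Fin M => lam (k i)) :=
      (hlam.comp hk).injective
    have hfv : ∀ m : Fin M,
        (∑ j, (c j * f (k j) x) * (lam (k j)) ^ (m : ℕ)) = 0 := by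
      intro m
      have := hiter (m : ℕ) x hx
      rw [← this]
      exact Finset.sum_congr rfl fun j _ => by ring
    have hv0 := Matrix.eq_zero_of_forall_pow_sum_mul_pow_eq_zero hinj hfv
    have := congrFun hv0 i
    simp only [Pi.zero_apply] at this
    exact (mul_eq_zero.mp this).resolve_left (hc i)
  -- Step 3: propagate vanishing, contradict nontriviality
  set i₀ : Fin M := ⟨0, hM⟩ with hi₀
  obtain ⟨x₀, hx₀U⟩ := hUne
  have hx₀ab : x₀ ∈ Set.Ioo a b := hUsub hx₀U
  have h0 : f (k i₀) x₀ = 0 := hvanish i₀ x₀ hx₀U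
  have h0' : deriv (f (k i₀)) x₀ = 0 := by
    have hEq : f (k i₀) =ᶠ[nhds x₀] (fun _ => (0:ℝ)) :=
      Filter.eventuallyEq_of_mem (hUopen.mem_nhds hx₀U) (hvanish i₀)
    rw [hEq.deriv_eq, deriv_const]
  obtain ⟨y, hyab, hyne⟩ := hf_nonzero (k i₀)
  exact hyne (eigen_vanish_propagate a b W hW (lam (k i₀)) (f (k i₀))
    (hf_smooth (k i₀)) (hsecond (k i₀)) x₀ hx₀ab h0 h0' y hyab)
end

section
/- (Pólya–Szegő bound for exponential sums.) Let n ≥ 1, let b_1 < b_2 < … < b_n be real numbers and a_1, …, a_n be nonzero real numbers, and define h : ℝ → ℝ by h(x) = Σ_{i=1}^n a_i·exp(b_i·x). Let C be the number of indices i ∈ {1, …, n−1} such that a_i·a_{i+1} < 0 (the number of sign changes in the coefficient sequence). Then the set {x ∈ ℝ : h(x) = 0} is finite and has at most C elements. -/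
open Finset

private lemma ps_bmono (n : ℕ) (b : ℕ → ℝ) (hb : ∀ i, i + 1 < n → b i < b (i + 1)) :
    ∀ i k, i < k → k < n → b i < b k := by
  intro i k hik hkn
  induction k with
  | zero => omega
  | succ m ih =>
    rcases Nat.lt_succ_iff_lt_or_eq.mp hik with hc | hc
    · exact (ih hc (by omega)).trans (hb m hkn)
    · subst hc; exact hb i hkn

private lemma ps_sum_delete (F : ℕ → ℝ) (n j : ℕ) (hj : j < n) (hFj : F j = 0) :
    ∑ i ∈ Finset.range (n - 1), (if i < j then F i else F (i + 1))
      = ∑ i ∈ Finset.range n, F i := by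
  rw [← Finset.sum_erase (Finset.range n) hFj]
  refine Finset.sum_nbij' (fun i => if i < j then i else i + 1)
    (fun i => if i < j then i else i - 1) ?_ ?_ ?_ ?_ ?_
  · intro i hi
    simp only [Finset.mem_range, Finset.mem_erase] at *
    split_ifs with hij <;> constructor <;> omega
  · intro i hi
    simp only [Finset.mem_range, Finset.mem_erase] at *
    split_ifs with hij <;> omega
  · intro i hi
    simp only [Finset.mem_range] at hi
    split_ifs <;> omega
  · intro i hi
    simp only [Finset.mem_range, Finset.mem_erase] at hi
    split_ifs <;> omega
  · intro i hi
    simp only [Finset.mem_range] at hi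
    split_ifs <;> rfl

private lemma ps_hasDerivAt (n : ℕ) (a c : ℕ → ℝ) (t : ℝ) :
    HasDerivAt (fun s => ∑ i ∈ Finset.range n, a i * Real.exp (c i * s))
      (∑ i ∈ Finset.range n, a i * c i * Real.exp (c i * t)) t := by
  apply HasDerivAt.fun_sum
  intro i _
  have h1 : HasDerivAt (fun s : ℝ => c i * s) (c i) t := by
    simpa using (hasDerivAt_id t).const_mul (c i)
  have h2 := (Real.hasDerivAt_exp (c i * t)).comp t h1
  have h3 := h2.const_mul (a i)
  convert h3 using 1
  all_goals first | rfl | ring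

private lemma ps_key : ∀ C n : ℕ, 1 ≤ n → ∀ a b : ℕ → ℝ,
    (∀ i, i + 1 < n → b i < b (i + 1)) → (∀ i < n, a i ≠ 0) →
    ((Finset.range (n - 1)).filter (fun i => a i * a (i + 1) < 0)).card ≤ C →
    ∀ x : Fin (C + 1) → ℝ, StrictMono x →
    (∀ k, ∑ i ∈ Finset.range n, a i * Real.exp (b i * x k) = 0) → False := by
  intro C
  induction C with
  | zero =>
    intro n hn a b hb ha hSC x hx hz
    have hno : ∀ i, i < n - 1 → ¬ (a i * a (i + 1) < 0) := by
      intro i hi hcon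
      have : i ∈ (Finset.range (n - 1)).filter (fun i => a i * a (i + 1) < 0) :=
        Finset.mem_filter.mpr ⟨Finset.mem_range.mpr hi, hcon⟩
      have := Finset.card_pos.mpr ⟨i, this⟩
      omega
    have hpos : ∀ i, i < n → 0 < a 0 * a i := by
      intro i
      induction i with
      | zero => intro _; exact mul_self_pos.mpr (ha 0 (by omega))
      | succ m ihm =>
        intro hm1
        have h1 : 0 < a 0 * a m := ihm (by omega)
        have h2 := hno m (by omega)
        have h3 : a m * a (m + 1) ≠ 0 := mul_ne_zero (ha m (by omega)) (ha _ hm1)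
        have h4 : 0 < a m * a (m + 1) := lt_of_le_of_ne (not_lt.mp h2) (Ne.symm h3)
        nlinarith [mul_pos h1 h4, mul_self_pos.mpr (ha m (by omega))]
    have hsum : 0 < ∑ i ∈ Finset.range n, a 0 * (a i * Real.exp (b i * x 0)) := by
      apply Finset.sum_pos
      · intro i hi
        have := mul_pos (hpos i (Finset.mem_range.mp hi)) (Real.exp_pos (b i * x 0))
        nlinarith
      · exact Finset.nonempty_range_iff.mpr (by omega)
    rw [← Finset.mul_sum, hz 0, mul_zero] at hsum
    exact lt_irrefl 0 hsum
  | succ C IH =>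
    intro n hn a b hb ha hSC x hx hz
    by_cases hle : ((Finset.range (n - 1)).filter (fun i => a i * a (i + 1) < 0)).card ≤ C
    · exact IH n hn a b hb ha hle (fun k => x k.castSucc)
        (hx.comp (fun _ _ h => h)) (fun k => hz _)
    have hScard : ((Finset.range (n - 1)).filter (fun i => a i * a (i + 1) < 0)).card = C + 1 := by
      omega
    set T := (Finset.range (n - 1)).filter (fun i => a i * a (i + 1) < 0) with hT
    have hTne : T.Nonempty := Finset.card_pos.mp (by omega)
    set j := T.min' hTne with hjdef
    have hjT : j ∈ T := T.min'_mem hTne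
    obtain ⟨hjr, hchange⟩ := Finset.mem_filter.mp hjT
    have hjlt : j < n - 1 := Finset.mem_range.mp hjr
    have hmin : ∀ k ∈ T, j ≤ k := fun k hk => T.min'_le k hk
    have hnochange : ∀ k, k < j → ¬ (a k * a (k + 1) < 0) := by
      intro k hkj hcon
      have : k ∈ T := Finset.mem_filter.mpr ⟨Finset.mem_range.mpr (by omega), hcon⟩
      exact absurd (hmin k this) (by omega)
    have hbm : ∀ i k, i < k → k < n → b i < b k := ps_bmono n b hb
    set a' : ℕ → ℝ := fun i => if i < j then a i * (b i - b j) else a (i + 1) * (b (i + 1) - b j)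
      with ha'def
    set b' : ℕ → ℝ := fun i => if i < j then b i - b j else b (i + 1) - b j with hb'def
    have hb' : ∀ i, i + 1 < n - 1 → b' i < b' (i + 1) := by
      intro i hi
      simp only [hb'def]
      split_ifs with h1 h2 h2
      · have := hb i (by omega); linarith
      · have h3 : j = i + 1 := by omega
        have := hbm i j h1 (by omega)
        have := hb j (by omega)
        rw [h3] at *
        linarith
      · omega
      · have := hb (i + 1) (by omega); linarith
    have ha' : ∀ i, i < n - 1 → a' i ≠ 0 := by
      intro i hi
      simp only [ha'def]
      split_ifs with h1
      · exact mul_ne_zero (ha i (by omega)) (sub_ne_zero.mpr (ne_of_lt (hbm i j h1 (by omega))))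
      · exact mul_ne_zero (ha (i + 1) (by omega))
          (sub_ne_zero.mpr (ne_of_gt (hbm j (i + 1) (by omega) (by omega))))
    -- sign change count of a'
    have hSC' : ((Finset.range (n - 1 - 1)).filter (fun i => a' i * a' (i + 1) < 0)).card ≤ C := by
      have hmain : ∀ i ∈ (Finset.range (n - 1 - 1)).filter (fun i => a' i * a' (i + 1) < 0),
          i + 1 ∈ T.erase j := by
        intro i hi
        obtain ⟨hir, hP⟩ := Finset.mem_filter.mp hi
        have hin : i < n - 1 - 1 := Finset.mem_range.mp hir
        simp only [ha'def] at hP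
        rcases lt_trichotomy (i + 1) j with hc | hc | hc
        · -- contradiction
          exfalso
          rw [if_pos (by omega : i < j), if_pos hc] at hP
          have haa : 0 < a i * a (i + 1) := by
            have h2 := hnochange i (by omega)
            have h3 : a i * a (i + 1) ≠ 0 :=
              mul_ne_zero (ha i (by omega)) (ha _ (by omega))
            exact lt_of_le_of_ne (not_lt.mp h2) (Ne.symm h3)
          have hbb : 0 < (b i - b j) * (b (i + 1) - b j) := by
            have := hbm i j (by omega) (by omega)
            have := hbm (i + 1) j hc (by omega)
            nlinarith
          nlinarith [mul_pos haa hbb]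
        · -- i + 1 = j : contradiction
          exfalso
          rw [if_pos (by omega : i < j), if_neg (by omega)] at hP
          have haj : 0 < a i * a (i + 1) := by
            have h2 := hnochange i (by omega)
            have h3 : a i * a (i + 1) ≠ 0 :=
              mul_ne_zero (ha i (by omega)) (ha _ (by omega))
            exact lt_of_le_of_ne (not_lt.mp h2) (Ne.symm h3)
          -- a (i+1) = a j , change at j : a j * a (j+1) < 0
          have hij : i + 1 = j := hc
          have hsq : 0 < a (i + 1) * a (i + 1) := mul_self_pos.mpr (ha _ (by omega))
          have hneg : a i * a (i + 1 + 1) < 0 := by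
            have hch : a (i + 1) * a (i + 1 + 1) < 0 := by rw [hij]; exact hchange
            nlinarith
          have hb1 : b i - b j < 0 := by
            have := hbm i j (by omega) (by omega); linarith
          have hb2 : 0 < b (i + 1 + 1) - b j := by
            have := hbm j (i + 1 + 1) (by omega) (by omega); linarith
          nlinarith [mul_pos_of_neg_of_neg hneg (mul_neg_of_neg_of_pos hb1 hb2)]
        · -- j < i + 1, i.e. j ≤ i
          rw [if_neg (by omega), if_neg (by omega)] at hP
          have hb1 : 0 < b (i + 1) - b j := by
            have := hbm j (i + 1) (by omega) (by omega); linarith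
          have hb2 : 0 < b (i + 1 + 1) - b j := by
            have := hbm j (i + 1 + 1) (by omega) (by omega); linarith
          have hch : a (i + 1) * a (i + 1 + 1) < 0 := by
            by_contra hcc
            push_neg at hcc
            nlinarith [mul_nonneg (mul_nonneg hcc hb1.le) hb2.le]
          refine Finset.mem_erase.mpr ⟨by omega, Finset.mem_filter.mpr
            ⟨Finset.mem_range.mpr (by omega), hch⟩⟩
      have hinj : Set.InjOn (fun i => i + 1)
          ↑((Finset.range (n - 1 - 1)).filter (fun i => a' i * a' (i + 1) < 0)) := by
        intro u _ v _ h
        simpa using h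
      have := Finset.card_le_card_of_injOn (fun i => i + 1) hmain hinj
      rw [Finset.card_erase_of_mem hjT, hScard] at this
      omega
    -- zeros of derivative via Rolle
    have hgz : ∀ k, ∑ i ∈ Finset.range n, a i * Real.exp ((b i - b j) * x k) = 0 := by
      intro k
      have : ∑ i ∈ Finset.range n, a i * Real.exp ((b i - b j) * x k)
          = (∑ i ∈ Finset.range n, a i * Real.exp (b i * x k)) * Real.exp (-(b j) * x k) := by
        rw [Finset.sum_mul]
        apply Finset.sum_congr rfl
        intro i _
        rw [mul_assoc, ← Real.exp_add]
        ring_nf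
      rw [this, hz k, zero_mul]
    have hderiv : ∀ t : ℝ, HasDerivAt
        (fun s => ∑ i ∈ Finset.range n, a i * Real.exp ((b i - b j) * s))
        (∑ i ∈ Finset.range (n - 1), a' i * Real.exp (b' i * t)) t := by
      intro t
      have h1 := ps_hasDerivAt n a (fun i => b i - b j) t
      have h2 : ∑ i ∈ Finset.range (n - 1), a' i * Real.exp (b' i * t)
          = ∑ i ∈ Finset.range n, a i * (b i - b j) * Real.exp ((b i - b j) * t) := by
        rw [← ps_sum_delete (fun i => a i * (b i - b j) * Real.exp ((b i - b j) * t)) n j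
          (by omega) (by simp)]
        apply Finset.sum_congr rfl
        intro i _
        simp only [ha'def, hb'def]
        split_ifs <;> rfl
      rw [h2]
      exact h1
    have hcont : Continuous (fun s => ∑ i ∈ Finset.range n, a i * Real.exp ((b i - b j) * s)) := by
      apply continuous_finset_sum
      intro i _
      exact continuous_const.mul (Real.continuous_exp.comp (continuous_const.mul continuous_id))
    have hy : ∀ k : Fin (C + 1), ∃ y, x k.castSucc < y ∧ y < x k.succ ∧
        ∑ i ∈ Finset.range (n - 1), a' i * Real.exp (b' i * y) = 0 := by
      intro k
      obtain ⟨c, hc1, hc2⟩ := exists_hasDerivAt_eq_zero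
        (hx (Fin.castSucc_lt_succ : k.castSucc < k.succ)) hcont.continuousOn
        (by rw [hgz, hgz]) (fun t _ => hderiv t)
      exact ⟨c, hc1.1, hc1.2, hc2⟩
    choose y hy1 hy2 hy3 using hy
    have hymono : StrictMono y := by
      intro u v huv
      have h1 : y u < x u.succ := hy2 u
      have h2 : x v.castSucc < y v := hy1 v
      have h3 : x u.succ ≤ x v.castSucc := by
        apply hx.monotone
        simp only [Fin.le_def, Fin.val_succ, Fin.coe_castSucc]
        exact huv
      linarith
    exact IH (n - 1) (by omega) a' b' hb' ha' hSC' y hymono hy3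

/-- Pólya–Szegő: an exponential sum Σ a_i e^{b_i x} with nonzero
coefficients and strictly increasing exponents has at most as many real zeros as
sign changes in its coefficient sequence. -/
theorem polya_szego_exponential_sum_zeros
    (n : ℕ) (hn : 1 ≤ n)
    (b : ℕ → ℝ) (hb : ∀ i, i + 1 < n → b i < b (i + 1))
    (a : ℕ → ℝ) (ha : ∀ i < n, a i ≠ 0)
    (h : ℝ → ℝ)
    (hh : ∀ x, h x = ∑ i ∈ Finset.range n, a i * Real.exp (b i * x))
    (C : ℕ)
    (hC : C = ((Finset.range (n - 1)).filter (fun i => a i * a (i + 1) < 0)).card) :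
    {x : ℝ | h x = 0}.Finite ∧ {x : ℝ | h x = 0}.ncard ≤ C := by
  have hkey : ∀ s : Finset ℝ, ↑s ⊆ {x : ℝ | h x = 0} → s.card ≤ C := by
    intro s hs
    by_contra hcon
    push_neg at hcon
    obtain ⟨t, hts, htc⟩ := Finset.exists_subset_card_eq (by omega : C + 1 ≤ s.card)
    have hx : StrictMono (fun k : Fin (C + 1) => ((t.orderIsoOfFin htc k : t) : ℝ)) := by
      intro u v huv
      exact (t.orderIsoOfFin htc).strictMono huv
    apply ps_key C n hn a b hb ha (le_of_eq hC.symm)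
      (fun k => ((t.orderIsoOfFin htc k : t) : ℝ)) hx
    intro k
    have hmem : ((t.orderIsoOfFin htc k : t) : ℝ) ∈ {x : ℝ | h x = 0} :=
      hs (hts (t.orderIsoOfFin htc k).2)
    rw [← hh]
    exact hmem
  constructor
  · by_contra hinf
    obtain ⟨s, hs1, hs2⟩ := Set.Infinite.exists_subset_card_eq hinf (C + 1)
    have := hkey s hs1
    omega
  · have hfin : {x : ℝ | h x = 0}.Finite := by
      by_contra hinf
      obtain ⟨s, hs1, hs2⟩ := Set.Infinite.exists_subset_card_eq hinf (C + 1)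
      have := hkey s hs1
      omega
    have := hkey hfin.toFinset (by simp)
    rwa [Set.ncard_eq_toFinset_card _ hfin]
end

section
/- There exists a real number C > 0 such that: (i) sin(2πx) − C·sin(3πx) > 0 for all x ∈ (0, 1/2); and (ii) the function x ↦ sin(2πx) + C·sin(3πx) has exactly one zero in the open interval (0, 1/2), i.e. the set {x ∈ (0,1/2) : sin(2πx) + C·sin(3πx) = 0} has exactly one element. -/
open Real

/-- there is C > 0 with sin(2πx) − C·sin(3πx) > 0 on (0,1/2) and such
that sin(2πx) + C·sin(3πx) has exactly one zero in (0,1/2). -/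
theorem exists_coefficient_sine_combination :
    ∃ C : ℝ, 0 < C ∧
      (∀ x ∈ Set.Ioo (0 : ℝ) (1 / 2),
        Real.sin (2 * π * x) - C * Real.sin (3 * π * x) > 0) ∧
      (∃! x : ℝ, x ∈ Set.Ioo (0 : ℝ) (1 / 2) ∧
        Real.sin (2 * π * x) + C * Real.sin (3 * π * x) = 0) := by
  have hπ := Real.pi_pos
  refine ⟨2/3, by norm_num, ?_, ?_⟩
  · intro x hx
    obtain ⟨hx0, hx2⟩ := hx
    have ht0 : 0 < π * x := by positivity
    have ht2 : π * x < π / 2 := by nlinarith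
    have hs : 0 < Real.sin (π * x) :=
      Real.sin_pos_of_pos_of_lt_pi ht0 (by linarith)
    have hc0 : 0 < Real.cos (π * x) :=
      Real.cos_pos_of_mem_Ioo ⟨by linarith, ht2⟩
    have hsq := Real.sin_sq_add_cos_sq (π * x)
    have hc1 : Real.cos (π * x) < 1 := by nlinarith
    have h2 : Real.sin (2 * π * x) = 2 * Real.sin (π * x) * Real.cos (π * x) := by
      rw [show 2 * π * x = 2 * (π * x) by ring, Real.sin_two_mul]
    have h3 : Real.sin (3 * π * x) = 3 * Real.sin (π * x) - 4 * Real.sin (π * x) ^ 3 := by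
      rw [show 3 * π * x = 3 * (π * x) by ring, Real.sin_three_mul]
    rw [h2, h3]
    nlinarith [mul_pos hs (mul_pos (sub_pos.mpr hc1)
      (show (0:ℝ) < 4 * Real.cos (π * x) + 1 by linarith)), hsq, hs, hc0]
  · set x₀ : ℝ := Real.arccos (1/4) / π with hx₀
    have ha0 : 0 < Real.arccos (1/4) := Real.arccos_pos.mpr (by norm_num)
    have ha2 : Real.arccos (1/4) < π / 2 := Real.arccos_lt_pi_div_two.mpr (by norm_num)
    have hpx₀ : π * x₀ = Real.arccos (1/4) := by
      rw [hx₀]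
      field_simp
    have hc : Real.cos (π * x₀) = 1/4 := by
      rw [hpx₀, Real.cos_arccos (by norm_num) (by norm_num)]
    have hmem : x₀ ∈ Set.Ioo (0:ℝ) (1/2) := by
      constructor
      · positivity
      · rw [hx₀, div_lt_iff₀ hπ]
        nlinarith
    refine ⟨x₀, ⟨hmem, ?_⟩, ?_⟩
    · have h2 : Real.sin (2 * π * x₀) = 2 * Real.sin (π * x₀) * Real.cos (π * x₀) := by
        rw [show 2 * π * x₀ = 2 * (π * x₀) by ring, Real.sin_two_mul]
      have h3 : Real.sin (3 * π * x₀) = 3 * Real.sin (π * x₀) - 4 * Real.sin (π * x₀) ^ 3 := by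
        rw [show 3 * π * x₀ = 3 * (π * x₀) by ring, Real.sin_three_mul]
      have hsq := Real.sin_sq_add_cos_sq (π * x₀)
      rw [hc] at hsq
      have hs2 : Real.sin (π * x₀) ^ 2 = 15/16 := by nlinarith
      rw [h2, h3, hc]
      linear_combination (-(8/3) * Real.sin (π * x₀)) * hs2
    · rintro y ⟨⟨hy0, hy2⟩, hval⟩
      have ht0 : 0 < π * y := by positivity
      have ht2 : π * y < π / 2 := by nlinarith
      have hs : 0 < Real.sin (π * y) :=
        Real.sin_pos_of_pos_of_lt_pi ht0 (by linarith)
      have hsq := Real.sin_sq_add_cos_sq (π * y)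
      have h2 : Real.sin (2 * π * y) = 2 * Real.sin (π * y) * Real.cos (π * y) := by
        rw [show 2 * π * y = 2 * (π * y) by ring, Real.sin_two_mul]
      have h3 : Real.sin (3 * π * y) = 3 * Real.sin (π * y) - 4 * Real.sin (π * y) ^ 3 := by
        rw [show 3 * π * y = 3 * (π * y) by ring, Real.sin_three_mul]
      rw [h2, h3] at hval
      have hcge : -1 ≤ Real.cos (π * y) := Real.neg_one_le_cos _
      have key : Real.sin (π * y) * ((4 * Real.cos (π * y) - 1) * (Real.cos (π * y) + 1)) = 0 := by
        linear_combination (3/2) * hval + (4 * Real.sin (π * y)) * hsq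
      have hcy : Real.cos (π * y) = 1/4 := by
        rcases mul_eq_zero.mp key with h | h
        · exact absurd h (ne_of_gt hs)
        · rcases mul_eq_zero.mp h with h' | h'
          · linarith
          · nlinarith [Real.cos_pos_of_mem_Ioo (show π * y ∈ Set.Ioo (-(π/2)) (π/2) from ⟨by linarith, ht2⟩)]
      have : π * y = π * x₀ := by
        apply Real.injOn_cos ⟨le_of_lt ht0, by linarith⟩ ⟨by nlinarith, by nlinarith⟩
        rw [hcy, hc]
      exact mul_left_cancel₀ (ne_of_gt hπ) this
end

section
/- Let a < b be real numbers, W : ℝ → ℝ a function that is C¹ on (a,b), and λ_1 < λ_2 < … < λ_M real numbers. For 1 ≤ i ≤ M let f_i : ℝ → ℝ be C² on (a,b), not identically zero on (a,b), with −f_i''(x) + W(x)·f_i(x) = λ_i·f_i(x) for all x ∈ (a,b), and let a_1, …, a_M be nonzero real numbers. Then for every y ∈ ℝ, the function F_y(x) = Σ_{i=1}^M a_i·exp(−λ_i·y)·f_i(x) does not vanish identically on any nonempty open subset of (a,b). -/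
open Set

theorem uc_aux (a b : ℝ) (W : ℝ → ℝ) (hWc : ContinuousOn W (Set.Ioo a b))
    (lam0 : ℝ) (f : ℝ → ℝ) (hf2 : ContDiffOn ℝ 2 f (Set.Ioo a b))
    (heq : ∀ x ∈ Set.Ioo a b, deriv (deriv f) x = (W x - lam0) * f x)
    (x₀ : ℝ) (hx₀ : x₀ ∈ Set.Ioo a b) (h0 : f x₀ = 0) (h0' : deriv f x₀ = 0) :
    ∀ x ∈ Set.Ioo a b, f x = 0 := by
  intro x₁ hx₁
  set a' : ℝ := (a + min x₀ x₁) / 2 with ha'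
  set b' : ℝ := (max x₀ x₁ + b) / 2 with hb'
  have hmin : a < min x₀ x₁ := lt_min hx₀.1 hx₁.1
  have hmax : max x₀ x₁ < b := max_lt hx₀.2 hx₁.2
  have h1 : a < a' := by rw [ha']; linarith
  have h2 : a' < min x₀ x₁ := by rw [ha']; linarith
  have h3 : max x₀ x₁ < b' := by rw [hb']; linarith
  have h4 : b' < b := by rw [hb']; linarith
  have ha'b' : a' < b' := lt_of_lt_of_le h2 (le_trans (min_le_max) (le_of_lt h3))
  have hsub : Icc a' b' ⊆ Ioo a b := fun z hz => ⟨lt_of_lt_of_le h1 hz.1, lt_of_le_of_lt hz.2 h4⟩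
  have hx₀' : x₀ ∈ Ioo a' b' := ⟨lt_of_lt_of_le h2 (min_le_left _ _), lt_of_le_of_lt (le_max_left _ _) h3⟩
  have hx₁' : x₁ ∈ Ioo a' b' := ⟨lt_of_lt_of_le h2 (min_le_right _ _), lt_of_le_of_lt (le_max_right _ _) h3⟩
  -- differentiability
  have hdf : DifferentiableOn ℝ f (Ioo a b) := hf2.differentiableOn (by norm_num)
  have hd1 : ContDiffOn ℝ 1 (deriv f) (Ioo a b) := hf2.deriv_of_isOpen isOpen_Ioo (by norm_num)
  have hdf' : DifferentiableOn ℝ (deriv f) (Ioo a b) := hd1.differentiableOn one_ne_zero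
  have H1 : ∀ z ∈ Ioo a b, HasDerivAt f (deriv f z) z := fun z hz =>
    (hdf.differentiableAt (isOpen_Ioo.mem_nhds hz)).hasDerivAt
  have H2 : ∀ z ∈ Ioo a b, HasDerivAt (deriv f) (deriv (deriv f) z) z := fun z hz =>
    (hdf'.differentiableAt (isOpen_Ioo.mem_nhds hz)).hasDerivAt
  -- bound on W - lam0
  obtain ⟨C, hC⟩ := (isCompact_Icc (a := a') (b := b')).exists_bound_of_continuousOn
    ((hWc.sub continuousOn_const).mono hsub)
  have hCnn : (0 : ℝ) ≤ C := le_trans (norm_nonneg _) (hC a' ⟨le_refl _, le_of_lt ha'b'⟩)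
  set K : NNReal := Real.toNNReal (max 1 C) with hK
  have hKcoe : (K : ℝ) = max 1 C := Real.coe_toNNReal _ (le_trans zero_le_one (le_max_left _ _))
  -- clamped potential
  set Q : ℝ → ℝ := fun t => W (max a' (min t b')) - lam0 with hQ
  have hclamp : ∀ t : ℝ, max a' (min t b') ∈ Icc a' b' := fun t =>
    ⟨le_max_left _ _, max_le (le_of_lt ha'b') (min_le_right _ _)⟩
  have hQb : ∀ t, |Q t| ≤ max 1 C := fun t =>
    le_trans (hC _ (hclamp t)) (le_max_right _ _)
  have hQeq : ∀ t ∈ Icc a' b', Q t = W t - lam0 := by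
    intro t ht
    show W (max a' (min t b')) - lam0 = W t - lam0
    rw [min_eq_left ht.2, max_eq_right ht.1]
  set v : ℝ → ℝ × ℝ → ℝ × ℝ := fun t p => (p.2, Q t * p.1) with hv_def
  have hv : ∀ t, LipschitzOnWith K (v t) (Set.univ : Set (ℝ × ℝ)) := by
    intro t
    rw [lipschitzOnWith_univ]
    apply LipschitzWith.of_dist_le_mul
    intro p q
    rw [hKcoe, Prod.dist_eq, Prod.dist_eq]
    simp only [hv_def]
    apply max_le
    · nlinarith [le_max_left (1:ℝ) C, le_max_right (dist p.1 q.1) (dist p.2 q.2),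
        dist_nonneg (x := p.1) (y := q.1), dist_nonneg (x := p.2) (y := q.2)]
    · rw [Real.dist_eq, Real.dist_eq, Real.dist_eq, ← mul_sub, abs_mul]
      exact mul_le_mul (hQb t) (le_max_left _ _) (abs_nonneg _)
        (le_trans zero_le_one (le_max_left _ _))
  set u : ℝ → ℝ × ℝ := fun t => (f t, deriv f t) with hu_def
  have hu : ∀ t ∈ Ioo a' b', HasDerivAt u (v t (u t)) t ∧ u t ∈ (Set.univ : Set (ℝ × ℝ)) := by
    intro t ht
    have htab : t ∈ Ioo a b := hsub (Ioo_subset_Icc_self ht)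
    refine ⟨?_, trivial⟩
    have h2' : deriv (deriv f) t = Q t * f t := by
      rw [heq t htab, hQeq t (Ioo_subset_Icc_self ht)]
    have := (H1 t htab).prodMk (h2' ▸ H2 t htab)
    exact this
  have hz : ∀ t ∈ Ioo a' b',
      HasDerivAt (fun _ : ℝ => ((0:ℝ),(0:ℝ))) (v t ((0:ℝ),(0:ℝ))) t ∧
        ((0:ℝ),(0:ℝ)) ∈ (Set.univ : Set (ℝ × ℝ)) := by
    intro t ht
    refine ⟨?_, trivial⟩
    have : v t ((0:ℝ),(0:ℝ)) = ((0:ℝ),(0:ℝ)) := by simp [hv_def]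
    rw [this]
    exact hasDerivAt_const t _
  have heqon := ODE_solution_unique_of_mem_Ioo (fun t _ => hv t) hx₀' hu hz
    (by simp [hu_def, h0, h0'])
  have := heqon hx₁'
  simpa [hu_def] using congrArg Prod.fst this

/-- every horizontal slice F_y(x) = Σ a_i e^{−λ_i y} f_i(x) of the
parabolic extension of a nontrivial linear combination of eigen-solutions does not
vanish identically on any nonempty open subset of (a,b). -/
theorem slice_not_zero_on_open_set
    (a b : ℝ) (hab : a < b)
    (W : ℝ → ℝ) (hW : ContDiffOn ℝ 1 W (Set.Ioo a b))
    (M : ℕ) (hM : 1 ≤ M)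
    (lam : Fin M → ℝ) (hlam : StrictMono lam)
    (f : Fin M → ℝ → ℝ)
    (hf_smooth : ∀ i, ContDiffOn ℝ 2 (f i) (Set.Ioo a b))
    (hf_nonzero : ∀ i, ∃ x ∈ Set.Ioo a b, f i x ≠ 0)
    (hf_eq : ∀ i, ∀ x ∈ Set.Ioo a b,
      -(deriv (deriv (f i)) x) + W x * f i x = lam i * f i x)
    (c : Fin M → ℝ) (hc : ∀ i, c i ≠ 0) :
    ∀ y : ℝ, ∀ U : Set ℝ, U ⊆ Set.Ioo a b → IsOpen U → U.Nonempty →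
      ¬ (∀ x ∈ U, (∑ i, c i * Real.exp (-(lam i) * y) * f i x) = 0) := by
  intro y U hUsub hUopen hUne hall
  set d : Fin M → ℝ := fun i => c i * Real.exp (-(lam i) * y) with hd
  have hdne : ∀ i, d i ≠ 0 := fun i => mul_ne_zero (hc i) (Real.exp_ne_zero _)
  -- differentiability facts
  have hdiff1 : ∀ i, ∀ x ∈ Set.Ioo a b, HasDerivAt (f i) (deriv (f i) x) x := by
    intro i x hx
    exact (((hf_smooth i).differentiableOn (by norm_num)).differentiableAt
      (isOpen_Ioo.mem_nhds hx)).hasDerivAt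
  have hdiff2 : ∀ i, ∀ x ∈ Set.Ioo a b,
      HasDerivAt (deriv (f i)) (deriv (deriv (f i)) x) x := by
    intro i x hx
    exact ((((hf_smooth i).deriv_of_isOpen (m := 1) isOpen_Ioo (by norm_num)).differentiableOn
      one_ne_zero).differentiableAt (isOpen_Ioo.mem_nhds hx)).hasDerivAt
  have hode : ∀ i, ∀ x ∈ Set.Ioo a b,
      deriv (deriv (f i)) x = (W x - lam i) * f i x := by
    intro i x hx
    have h := hf_eq i x hx
    have : deriv (deriv (f i)) x = W x * f i x - lam i * f i x := by linarith
    rw [this]; ring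
  -- Claim 1: all powers vanish on U
  have claim1 : ∀ k : ℕ, ∀ x ∈ U, (∑ i, d i * lam i ^ k * f i x) = 0 := by
    intro k
    induction k with
    | zero => intro x hx; simpa only [pow_zero, mul_one, hd] using hall x hx
    | succ k ih =>
      intro x hxU
      have hxab := hUsub hxU
      set S : ℝ → ℝ := fun z => ∑ i, d i * lam i ^ k * f i z with hS
      have hSd : ∀ z ∈ Set.Ioo a b,
          HasDerivAt S (∑ i, d i * lam i ^ k * deriv (f i) z) z := by
        intro z hz
        exact HasDerivAt.fun_sum fun i _ => ((hdiff1 i z hz).const_mul _)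
      have hS'eq : Set.EqOn (deriv S)
          (fun z => ∑ i, d i * lam i ^ k * deriv (f i) z) (Set.Ioo a b) :=
        fun z hz => (hSd z hz).deriv
      have hS'0 : ∀ z ∈ U, deriv S z = 0 := by
        intro z hz
        have he : S =ᶠ[nhds z] fun _ => 0 :=
          Filter.eventuallyEq_of_mem (hUopen.mem_nhds hz) ih
        rw [he.deriv_eq]; exact deriv_const z 0
      have h2 : deriv (deriv S) x = ∑ i, d i * lam i ^ k * deriv (deriv (f i)) x := by
        have e : deriv S =ᶠ[nhds x] fun z => ∑ i, d i * lam i ^ k * deriv (f i) z :=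
          Filter.eventuallyEq_of_mem (isOpen_Ioo.mem_nhds hxab) hS'eq
        rw [e.deriv_eq]
        exact (HasDerivAt.fun_sum fun i _ => ((hdiff2 i x hxab).const_mul _)).deriv
      have h20 : deriv (deriv S) x = 0 := by
        have he : deriv S =ᶠ[nhds x] fun _ => 0 :=
          Filter.eventuallyEq_of_mem (hUopen.mem_nhds hxU) hS'0
        rw [he.deriv_eq]; exact deriv_const x 0
      calc (∑ i, d i * lam i ^ (k+1) * f i x)
          = W x * S x - deriv (deriv S) x := by
            rw [h2, hS, Finset.mul_sum, ← Finset.sum_sub_distrib]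
            apply Finset.sum_congr rfl
            intro i _
            rw [hode i x hxab]
            ring
        _ = 0 := by
            have hSx : S x = 0 := ih x hxU
            rw [hSx, h20, mul_zero, sub_zero]
  -- Claim 2: each f i vanishes on U (Vandermonde)
  have claim2 : ∀ x ∈ U, ∀ i, f i x = 0 := by
    intro x hxU i
    set w : Fin M → ℝ := fun j => d j * f j x with hw
    have hvm : Matrix.vecMul w (Matrix.vandermonde lam) = 0 := by
      funext k
      have h := claim1 (k : ℕ) x hxU
      simp only [Matrix.vecMul, dotProduct, Matrix.vandermonde_apply,
        Pi.zero_apply, hw]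
      rw [← h]
      apply Finset.sum_congr rfl
      intro j _
      ring
    have hdet : (Matrix.vandermonde lam).det ≠ 0 :=
      Matrix.det_vandermonde_ne_zero_iff.mpr hlam.injective
    have hunit : IsUnit (Matrix.vandermonde lam).det := isUnit_iff_ne_zero.mpr hdet
    have hw0 : w = 0 := by
      calc w = Matrix.vecMul w ((Matrix.vandermonde lam) * (Matrix.vandermonde lam)⁻¹) := by
            rw [Matrix.mul_nonsing_inv _ hunit, Matrix.vecMul_one]
        _ = Matrix.vecMul (Matrix.vecMul w (Matrix.vandermonde lam))
              (Matrix.vandermonde lam)⁻¹ := (Matrix.vecMul_vecMul _ _ _).symm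
        _ = 0 := by rw [hvm, Matrix.zero_vecMul]
    have := congrFun hw0 i
    simp only [hw, Pi.zero_apply] at this
    exact (mul_eq_zero.mp this).resolve_left (hdne i)
  -- unique continuation for f i0
  obtain ⟨x₀, hx₀U⟩ := hUne
  have hx₀ := hUsub hx₀U
  set i0 : Fin M := ⟨0, hM⟩ with hi0
  obtain ⟨x₁, hx₁, hfx₁⟩ := hf_nonzero i0
  have h0 : f i0 x₀ = 0 := claim2 x₀ hx₀U i0
  have h0' : deriv (f i0) x₀ = 0 := by
    have he : f i0 =ᶠ[nhds x₀] fun _ => 0 :=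
      Filter.eventuallyEq_of_mem (hUopen.mem_nhds hx₀U) (fun z hz => claim2 z hz i0)
    rw [he.deriv_eq]; exact deriv_const x₀ 0
  exact hfx₁ (uc_aux a b W hW.continuousOn (lam i0) (f i0) (hf_smooth i0)
    (hode i0) x₀ hx₀ h0 h0' x₁ hx₁)
end
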